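/- Let Y be a connected topological manifold (or more generally a path-connected, locally path-connected topological space), X ⊆ Y a connected open subset, f : X̃ → X and Ψ : Ỹ → Y universal covering maps, and g : X̃ → Ỹ a continuous lift of the composition of f with the inclusion i : X → Y (i.e. Ψ ∘ g = i ∘ f). If the induced homomorphism i* : π₁(X) → π₁(Y) is injective, then g is injective. -/

import Mathlib

open CategoryTheory FundamentalGroupoid Metric Set

/-- The homomorphism induced on fundamental groups by a continuous map. -/
noncomputable def pi1map {X Y : Type} [TopologicalSpace X] [TopologicalSpace Y]
    (φ : C(X, Y)) (x : X) :
    Aut (FundamentalGroupoid.mk x : FundamentalGroupoid X) →*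
      Aut (FundamentalGroupoid.mk (φ x) : FundamentalGroupoid Y) :=
  Functor.mapAut (FundamentalGroupoid.mk x)
    (πₘ (TopCat.ofHom φ : TopCat.of X ⟶ TopCat.of Y) : FundamentalGroupoid X ⥤ FundamentalGroupoid Y)

/-- `f` restricted to `U` is a covering map onto `Ω`. -/
def IsCoveringOnto {E F : Type} [TopologicalSpace E] [TopologicalSpace F]
    (f : E → F) (U : Set E) (Ω : Set F) : Prop :=
  Set.SurjOn f U Ω ∧
    ∃ h : Set.MapsTo f U Ω, IsCoveringMap (Set.MapsTo.restrict f U Ω h)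

section AuxiliaryLemmas

open unitInterval

noncomputable section

attribute [local instance] Path.Homotopic.setoid

noncomputable section

attribute [local instance] Path.Homotopic.setoid

/-- min in the unit interval -/
def imin (a b : I) : I :=
  ⟨min a.1 b.1, ⟨le_min a.2.1 b.2.1, min_le_of_left_le a.2.2⟩⟩

/-- max in the unit interval -/
def imax (a b : I) : I :=
  ⟨max a.1 b.1, ⟨le_max_of_le_left a.2.1, max_le a.2.2 b.2.2⟩⟩

theorem covering_fiber_nonempty {E B : Type} [TopologicalSpace E] [TopologicalSpace B]
    [ConnectedSpace B] [Nonempty E] {f : E → B} (hf : IsCoveringMap f) (b : B) :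
    Nonempty (f ⁻¹' {b}) := by
  let S : Set B := {b | Nonempty (f ⁻¹' {b})}
  have key : ∀ b, ∃ U : Set B, b ∈ U ∧ IsOpen U ∧
      ∀ b' ∈ U, (Nonempty (f ⁻¹' {b'}) ↔ Nonempty (f ⁻¹' {b})) := by
    intro b
    obtain ⟨_, U, hbU, hU, -, H, hH⟩ := hf b
    have aux : ∀ b' ∈ U, (Nonempty (f ⁻¹' {b'}) ↔ Nonempty (f ⁻¹' {b})) := by
      intro b' hb'
      constructor
      · rintro ⟨⟨e, he⟩⟩
        have hmem : e ∈ f ⁻¹' U := by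
          show f e ∈ U
          rw [show f e = b' from he]
          exact hb'
        exact ⟨(H ⟨e, hmem⟩).2⟩
      · rintro ⟨i⟩
        refine ⟨⟨(H.symm (⟨b', hb'⟩, i)).1, ?_⟩⟩
        have h1 := hH (H.symm (⟨b', hb'⟩, i))
        rw [Homeomorph.apply_symm_apply] at h1
        exact h1.symm
    exact ⟨U, hbU, hU, aux⟩
  have hS : IsClopen S := by
    constructor
    · rw [← isOpen_compl_iff, isOpen_iff_forall_mem_open]
      intro b hb
      obtain ⟨U, hbU, hU, hiff⟩ := key b
      exact ⟨U, fun b' hb' h => hb ((hiff b' hb').1 h), hU, hbU⟩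
    · rw [isOpen_iff_forall_mem_open]
      intro b hb
      obtain ⟨U, hbU, hU, hiff⟩ := key b
      exact ⟨U, fun b' hb' => (hiff b' hb').2 hb, hU, hbU⟩
  obtain ⟨e⟩ := ‹Nonempty E›
  have hSu : S = univ := hS.eq_univ ⟨f e, ⟨⟨e, rfl⟩⟩⟩
  have hb : b ∈ S := hSu ▸ mem_univ b
  exact hb

theorem hlp {E B : Type} [TopologicalSpace E] [TopologicalSpace B]
    {f : E → B} [∀ b : B, Nonempty (f ⁻¹' {b})] (hf : IsCoveringMap f) (H : C(I × I, B)) (Γ : C(I, E))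
    (h0 : ∀ s : I, f (Γ s) = H (s, 0)) :
    ∃ G : I × I → E, Continuous G ∧ (∀ p, f (G p) = H p) ∧ ∀ s : I, G (s, 0) = Γ s := by
  classical
  haveI : PreconnectedSpace I := Subtype.preconnectedSpace isPreconnected_Icc
  -- trivializations
  have hdisc : ∀ b : B, DiscreteTopology (f ⁻¹' {b}) := fun b => (hf b).1
  set T : ∀ b : B, Bundle.Trivialization (f ⁻¹' {b}) f := fun b => (hf b).toTrivialization with hT
  -- the open cover of the square
  set c : B → Set (I × I) := fun b => H ⁻¹' (T b).baseSet with hc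
  have hcopen : ∀ b, IsOpen (c b) := fun b => (T b).open_baseSet.preimage H.continuous
  have hccov : (univ : Set (I × I)) ⊆ ⋃ b, c b := fun p _ =>
    mem_iUnion.2 ⟨H p, (hf (H p)).mem_toTrivialization_baseSet⟩
  obtain ⟨δ, hδ, hleb⟩ := lebesgue_number_lemma_of_metric isCompact_univ hcopen hccov
  obtain ⟨n₀, hn₀⟩ := exists_nat_one_div_lt hδ
  set n : ℕ := n₀ + 1 with hn
  have hnpos : (0:ℝ) < n := by positivity
  have hδn : 1 / (n:ℝ) < δ := by exact_mod_cast hn₀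
  -- the subdivision points
  set t : ℕ → I := fun i => ⟨min ((i:ℝ) / n) 1,
    ⟨le_min (by positivity) zero_le_one, min_le_right _ _⟩⟩ with ht
  have htval : ∀ i : ℕ, i ≤ n → ((t i : ℝ)) = (i:ℝ) / n := by
    intro i hi
    exact min_eq_left ((div_le_one hnpos).2 (by exact_mod_cast hi))
  have ht0 : t 0 = 0 := Subtype.ext (by simp [ht])
  have htn : t n = 1 := Subtype.ext (by
    simp only [ht]
    rw [div_self (ne_of_gt hnpos)]
    simp)
  have htmono : ∀ i : ℕ, t i ≤ t (i + 1) := by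
    intro i
    apply Subtype.mk_le_mk.2
    refine min_le_min ?_ le_rfl
    gcongr
    exact_mod_cast Nat.le_succ i
  -- local lifts over a neighborhood of each s₀
  have local_lift : ∀ s₀ : I, ∃ N : Set I, IsOpen N ∧ s₀ ∈ N ∧
      ∃ G : I × I → E, ContinuousOn G (N ×ˢ (univ : Set I)) ∧
        (∀ p ∈ N ×ˢ (univ : Set I), f (G p) = H p) ∧ (∀ s ∈ N, G (s, 0) = Γ s) := by
    intro s₀
    set N : Set I := ball s₀ (δ/2) with hNdef
    have hNopen : IsOpen N := isOpen_ball
    have hNmem : s₀ ∈ N := mem_ball_self (by linarith)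
    have hNpre : _root_.IsPreconnected N := by
      have himg : (Subtype.val '' N : Set ℝ) = Ioo ((s₀:ℝ) - δ/2) ((s₀:ℝ) + δ/2) ∩ Icc 0 1 := by
        ext x
        constructor
        · rintro ⟨y, hy, rfl⟩
          rw [hNdef, mem_ball, Subtype.dist_eq, Real.dist_eq] at hy
          have := abs_lt.1 hy
          exact ⟨⟨by linarith, by linarith⟩, y.2⟩
        · rintro ⟨⟨hx1, hx2⟩, hx3⟩
          refine ⟨⟨x, hx3⟩, ?_, rfl⟩
          rw [hNdef, mem_ball, Subtype.dist_eq, Real.dist_eq]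
          rw [abs_lt]
          constructor <;> simp <;> linarith
      have hpre : _root_.IsPreconnected (Subtype.val '' N) := by
        rw [himg]
        exact (Set.ordConnected_Ioo.inter Set.ordConnected_Icc).isPreconnected
      exact Topology.IsInducing.subtypeVal.isPreconnected_image.mp hpre
    have hsub : ∀ i : ℕ, i + 1 ≤ n → ∃ b : B, N ×ˢ Icc (t i) (t (i+1)) ⊆ c b := by
      intro i hi
      obtain ⟨b, hb⟩ := hleb (s₀, t i) trivial
      refine ⟨b, fun p hp => hb ?_⟩
      rw [mem_ball, Prod.dist_eq]
      apply max_lt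
      · exact lt_of_lt_of_le (mem_ball.1 hp.1) (by linarith)
      · have h1 : (t i : ℝ) ≤ (p.2 : ℝ) := hp.2.1
        have h2 : (p.2 : ℝ) ≤ (t (i+1) : ℝ) := hp.2.2
        have hgap : (t (i+1) : ℝ) - (t i : ℝ) = 1 / n := by
          rw [htval _ hi, htval _ (le_trans (Nat.le_succ i) hi)]
          push_cast; ring
        rw [Subtype.dist_eq, Real.dist_eq, abs_of_nonneg (by linarith)]
        linarith
    -- inductive construction of the lift on N × [0, t i]
    have key : ∀ i : ℕ, i ≤ n → ∃ G : I × I → E,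
        ContinuousOn G (N ×ˢ (univ : Set I)) ∧
        (∀ p ∈ N ×ˢ (univ : Set I), f (G p) = H (p.1, imin p.2 (t i))) ∧
        (∀ s ∈ N, G (s, 0) = Γ s) := by
      intro i
      induction i with
      | zero =>
        intro _
        refine ⟨fun p => Γ p.1, (Γ.continuous.comp continuous_fst).continuousOn, ?_, fun s _ => rfl⟩
        intro p _
        have : imin p.2 (t 0) = 0 := by
          rw [ht0]; exact Subtype.ext (min_eq_right p.2.2.1)
        rw [this, h0]
      | succ i ih =>
        intro hi1
        obtain ⟨G, hGc, hGf, hG0⟩ := ih (le_trans (Nat.le_succ i) hi1)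
        obtain ⟨b, hb⟩ := hsub i hi1
        haveI := hdisc b
        set e : Bundle.Trivialization (f ⁻¹' {b}) f := T b with he
        have htmono' : ∀ j : ℕ, ((t j : ℝ)) ≤ ((t (j+1) : ℝ)) := fun j => htmono j
        have hminself : ∀ u : I, imin u u = u := fun u => Subtype.ext (min_self _)
        have htii : ∀ s ∈ N, (s, t i) ∈ N ×ˢ Icc (t i) (t (i+1)) :=
          fun s hs => ⟨hs, le_refl _, htmono i⟩
        have hfG : ∀ s ∈ N, f (G (s, t i)) = H (s, t i) := by
          intro s hs
          rw [hGf (s, t i) ⟨hs, trivial⟩, hminself]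
        have hsrc : ∀ s ∈ N, G (s, t i) ∈ e.source := by
          intro s hs
          rw [e.mem_source, hfG s hs]
          exact hb (htii s hs)
        -- the sheet
        set sh : I → (f ⁻¹' {b}) := fun s => (e (G (s, t i))).2 with hsh
        have hshc : ContinuousOn sh N := by
          have h1 : ContinuousOn (fun s : I => G (s, t i)) N := by
            apply hGc.comp (Continuous.continuousOn (by fun_prop))
            intro s hs
            exact ⟨hs, trivial⟩
          exact continuous_snd.comp_continuousOn
            (e.continuousOn_toFun.comp h1 (fun s hs => hsrc s hs))
        have hshconst : ∀ s ∈ N, sh s = sh s₀ := by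
          intro s hs
          have himg := hNpre.image sh hshc
          exact himg.subsingleton (mem_image_of_mem sh hs) (mem_image_of_mem sh hNmem)
        -- the clamped parameter
        set clamp : I → I := fun u => imax (imin u (t (i+1))) (t i) with hclampdef
        have hclampc : Continuous clamp := by
          apply Continuous.subtype_mk
          exact ((continuous_subtype_val.min continuous_const).max continuous_const)
        have hclampmem : ∀ (s : I), s ∈ N → ∀ u : I, (s, clamp u) ∈ N ×ˢ Icc (t i) (t (i+1)) := by
          intro s hs u
          refine ⟨hs, Subtype.mk_le_mk.2 (le_max_right _ _), Subtype.mk_le_mk.2 ?_⟩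
          exact max_le (min_le_right _ _) (htmono' i)
        -- the new piece
        set G' : I × I → E := fun p =>
          e.toOpenPartialHomeomorph.symm (H (p.1, clamp p.2), sh s₀) with hG'
        have hG'tgt : ∀ p : I × I, p.1 ∈ N → (H (p.1, clamp p.2), sh s₀) ∈ e.target := by
          intro p hp
          rw [e.mem_target]
          exact hb (hclampmem p.1 hp p.2)
        have hG'c : ContinuousOn G' (N ×ˢ (univ : Set I)) := by
          apply e.toOpenPartialHomeomorph.continuousOn_symm.comp
          · apply Continuous.continuousOn
            refine Continuous.prodMk (H.continuous.comp ?_) continuous_const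
            exact continuous_fst.prodMk (hclampc.comp continuous_snd)
          · intro p hp
            exact hG'tgt p hp.1
        have hG'f : ∀ p : I × I, p.1 ∈ N → f (G' p) = H (p.1, clamp p.2) := by
          intro p hp
          exact e.proj_symm_apply (hG'tgt p hp)
        -- the two pieces agree at t i
        have hagree : ∀ s ∈ N, G' (s, t i) = G (s, t i) := by
          intro s hs
          have hclampti : clamp (t i) = t i := by
            apply Subtype.ext
            show max (min ((t i : ℝ)) _) _ = _
            rw [min_eq_left (htmono' i), max_self]
          have : (H (s, clamp (t i)), sh s₀) = e (G (s, t i)) := by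
            rw [hclampti]
            refine Prod.ext_iff.2 ⟨?_, ?_⟩
            · rw [← hfG s hs]
              exact (e.coe_fst (hsrc s hs)).symm
            · exact (hshconst s hs).symm
          show e.toOpenPartialHomeomorph.symm (H (s, clamp (t i)), sh s₀) = G (s, t i)
          rw [this]
          exact e.toOpenPartialHomeomorph.left_inv (hsrc s hs)
        -- glue
        refine ⟨fun p => if (p.2 : ℝ) ≤ (t i : ℝ) then G p else G' p, ?_, ?_, ?_⟩
        · rw [continuousOn_iff_continuous_restrict] at hGc hG'c ⊢
          apply Continuous.if_le hGc hG'c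
            (continuous_subtype_val.comp (continuous_snd.comp continuous_subtype_val))
            continuous_const
          rintro ⟨⟨s, u⟩, hsu⟩ hu
          have : u = t i := Subtype.ext hu
          subst this
          exact (hagree s hsu.1).symm
        · rintro ⟨s, u⟩ ⟨hs, -⟩
          dsimp only
          by_cases hu : (u : ℝ) ≤ (t i : ℝ)
          · rw [if_pos hu, hGf (s, u) ⟨hs, trivial⟩]
            have heq : imin u (t i) = imin u (t (i+1)) := Subtype.ext (by
              show min (u:ℝ) _ = min (u:ℝ) _
              rw [min_eq_left hu, min_eq_left (le_trans hu (htmono' i))])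
            rw [heq]
          · rw [if_neg hu, hG'f (s, u) hs]
            have heq : clamp u = imin u (t (i+1)) := Subtype.ext (by
              show max (min (u:ℝ) _) ((t i : ℝ)) = min (u:ℝ) (t (i+1):ℝ)
              rw [max_eq_left (le_min (le_of_not_ge hu) (htmono' i))])
            rw [heq]
        · intro s hs
          dsimp only
          rw [if_pos, hG0 s hs]
          exact (t i).2.1
    obtain ⟨G, hGc, hGf, hG0⟩ := key n le_rfl
    refine ⟨N, hNopen, hNmem, G, hGc, ?_, hG0⟩
    intro p hp
    have heq : imin p.2 (t n) = p.2 := by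
      rw [htn]; exact Subtype.ext (min_eq_left p.2.2.2)
    rw [hGf p hp, heq]
  choose Nf hNopen hNmem Gf hGc hGf hG0 using local_lift
  have compat : ∀ s₀ : I, ∀ s, s ∈ Nf s₀ → ∀ u : I, Gf s₀ (s, u) = Gf s (s, u) := by
    intro s₀ s hs
    have h1 : Continuous (fun v : I => Gf s₀ (s, v)) :=
      (hGc s₀).comp_continuous (by fun_prop) (fun v => ⟨hs, trivial⟩)
    have h2 : Continuous (fun v : I => Gf s (s, v)) :=
      (hGc s).comp_continuous (by fun_prop) (fun v => ⟨hNmem s, trivial⟩)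
    have he : f ∘ (fun v : I => Gf s₀ (s, v)) = f ∘ (fun v : I => Gf s (s, v)) := by
      funext v
      rw [Function.comp_apply, Function.comp_apply, hGf s₀ (s, v) ⟨hs, trivial⟩,
        hGf s (s, v) ⟨hNmem s, trivial⟩]
    have h0' : Gf s₀ (s, 0) = Gf s (s, 0) := by rw [hG0 s₀ s hs, hG0 s s (hNmem s)]
    have heq := hf.eq_of_comp_eq h1 h2 he 0 h0'
    exact fun u => congrFun heq u
  refine ⟨fun p => Gf p.1 p, ?_, ?_, ?_⟩
  · rw [continuous_iff_continuousAt]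
    intro p
    have hopen : IsOpen (Nf p.1 ×ˢ (univ : Set I)) := (hNopen p.1).prod isOpen_univ
    have hmem : p ∈ Nf p.1 ×ˢ (univ : Set I) := ⟨hNmem p.1, trivial⟩
    have hCA : ContinuousAt (Gf p.1) p := (hGc p.1).continuousAt (hopen.mem_nhds hmem)
    apply hCA.congr
    apply Filter.eventuallyEq_of_mem (hopen.mem_nhds hmem)
    rintro ⟨s, u⟩ ⟨hs, -⟩
    exact compat p.1 s hs u
  · intro p
    exact hGf p.1 p ⟨hNmem p.1, trivial⟩
  · intro s
    exact hG0 s s (hNmem s)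


private lemma path_homotopic_cast {X : Type} [TopologicalSpace X] {x' x y' y : X}
    {p q : Path x y} (h : Path.Homotopic p q) (hx : x' = x) (hy : y' = y) :
    Path.Homotopic (p.cast hx hy) (q.cast hx hy) := by
  subst hx; subst hy
  exact h

private lemma injective_mapAut_of_iso {C D : Type*} [Category C] [Category D]
    (F : C ⥤ D) {x y : C} (e : x ≅ y)
    (h : Function.Injective (Functor.mapAut y F)) :
    Function.Injective (Functor.mapAut x F) := by
  intro u v huv
  have key : ∀ w : Aut x, Functor.mapAut y F ((Aut.autMulEquivOfIso e) w)
      = (Aut.autMulEquivOfIso (F.mapIso e)) (Functor.mapAut x F w) := by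
    intro w
    apply Iso.ext
    show F.map (e.inv ≫ w.hom ≫ e.hom) = F.map e.inv ≫ F.map w.hom ≫ F.map e.hom
    simp
  have h2 : (Aut.autMulEquivOfIso e) u = (Aut.autMulEquivOfIso e) v := by
    apply h
    rw [key u, key v, huv]
  exact (Aut.autMulEquivOfIso e).injective h2

/-- A loop as an element of the fundamental group. -/
private def loopToAut {X : Type} [TopologicalSpace X] {x : X}
    (p : Path.Homotopic.Quotient x x) : Aut (FundamentalGroupoid.mk x : FundamentalGroupoid X) where
  hom := p
  inv := CategoryTheory.Groupoid.inv p

private lemma loopToAut_eq_one_iff {X : Type} [TopologicalSpace X] {x : X}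
    (p : Path x x) : loopToAut ⟦p⟧ = 1 ↔ Path.Homotopic p (Path.refl x) := by
  constructor
  · intro h
    have h2 : (loopToAut (X := X) ⟦p⟧).hom = (1 : Aut (FundamentalGroupoid.mk x : FundamentalGroupoid X)).hom := by rw [h]
    have h3 : (⟦p⟧ : Path.Homotopic.Quotient x x) = ⟦Path.refl x⟧ := h2
    exact Quotient.exact h3
  · intro h
    apply Aut.ext
    exact Quotient.sound h

private lemma pi1map_loopToAut {X Y : Type} [TopologicalSpace X] [TopologicalSpace Y]
    (φ : C(X, Y)) {x : X} (p : Path x x) :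
    pi1map φ x (loopToAut ⟦p⟧) = loopToAut ⟦p.map φ.continuous⟧ := by
  apply Aut.ext
  show (πₘ (TopCat.ofHom φ : TopCat.of X ⟶ TopCat.of Y)).map
      ((loopToAut (X := X) ⟦p⟧).hom) = (⟦p.map φ.continuous⟧ : Path.Homotopic.Quotient (φ x) (φ x))
  refine (FundamentalGroupoid.map_eq (X := TopCat.of X) (Y := TopCat.of Y) φ _).trans ?_
  exact (Path.Homotopic.Quotient.mk_map p φ).symm


end
end
end AuxiliaryLemmas

section Main

open unitInterval

attribute [local instance] Path.Homotopic.setoid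

/-- If `i* : π₁(X) → π₁(Y)` is injective, then any lift `g` of the
universal covering `f : X̃ → X` through the universal covering `Ψ : Ỹ → Y` is injective. -/
theorem lift_injective_of_pi1_injective
    {Y Xt Yt : Type} [TopologicalSpace Y] [TopologicalSpace Xt] [TopologicalSpace Yt]
    [PathConnectedSpace Y] [LocallyPathConnectedSpace Y]
    (X : Set Y) (hXopen : IsOpen X) (hXconn : IsConnected X)
    [SimplyConnectedSpace Xt] [SimplyConnectedSpace Yt]
    (f : Xt → X) (hf : IsCoveringMap f)
    (Ψ : Yt → Y) (hΨ : IsCoveringMap Ψ)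
    (g : Xt → Yt) (hg : Continuous g)
    (hlift : ∀ z, Ψ (g z) = (f z : Y))
    (x₀ : Xt)
    (hinj : Function.Injective
      (pi1map (⟨Subtype.val, continuous_subtype_val⟩ : C(X, Y)) (f x₀))) :
    Function.Injective g := by
  classical
  set φ : C(X, Y) := ⟨Subtype.val, continuous_subtype_val⟩ with hφ
  haveI : LocallyPathConnectedSpace X := hXopen.locPathConnectedSpace
  haveI : ConnectedSpace X := isConnected_iff_connectedSpace.mp hXconn
  haveI : PathConnectedSpace X := pathConnectedSpace_iff_connectedSpace.mpr inferInstance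
  intro a b hab
  have hfab : f a = f b := Subtype.ext (by rw [← hlift a, ← hlift b, hab])
  set γ : Path a b := PathConnectedSpace.somePath a b with hγ
  set loop : Path (f a) (f a) := (γ.map hf.continuous).cast rfl hfab with hloop
  set loopY : Path (g a) (g a) := (γ.map hg).cast rfl hab with hloopY
  have hYnull : Path.Homotopic loopY (Path.refl (g a)) :=
    SimplyConnectedSpace.paths_homotopic _ _
  have hmapped : Path.Homotopic (loopY.map hΨ.continuous)
      ((Path.refl (g a)).map hΨ.continuous) :=
    Path.Homotopic.map hYnull ⟨Ψ, hΨ.continuous⟩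
  have hXimg : Path.Homotopic (loop.map φ.continuous) (Path.refl ((f a : Y))) := by
    have hcast := path_homotopic_cast hmapped (hlift a).symm (hlift a).symm
    have h1 : (loopY.map hΨ.continuous).cast (hlift a).symm (hlift a).symm
        = loop.map φ.continuous := by
      ext s
      show Ψ (loopY s) = φ (loop s)
      rw [hloopY, hloop]
      have e1 : ((γ.map hg).cast rfl hab) s = g (γ s) := by
        rw [Path.cast_coe]; rfl
      have e2 : ((γ.map hf.continuous).cast rfl hfab) s = f (γ s) := by
        rw [Path.cast_coe]; rfl
      rw [e1, e2]
      exact hlift (γ s)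
    have h2 : ((Path.refl (g a)).map hΨ.continuous).cast (hlift a).symm (hlift a).symm
        = Path.refl ((f a : Y)) := by
      ext s
      show Ψ ((Path.refl (g a)) s) = (f a : Y)
      rw [Path.refl_apply]
      exact hlift a
    rw [h1, h2] at hcast
    exact hcast
  have hXnull : Path.Homotopic loop (Path.refl (f a)) := by
    have hinj2 : Function.Injective (pi1map φ (f a)) := by
      set η : Path (f a) (f x₀) := PathConnectedSpace.somePath (f a) (f x₀) with hη
      have e : FundamentalGroupoid.mk (f a) ≅ FundamentalGroupoid.mk (f x₀) :=
        asIso (show FundamentalGroupoid.mk (f a) ⟶ FundamentalGroupoid.mk (f x₀) from ⟦η⟧)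
      exact injective_mapAut_of_iso _ e hinj
    have h1 : pi1map φ (f a) (loopToAut ⟦loop⟧) = 1 := by
      rw [pi1map_loopToAut, loopToAut_eq_one_iff]
      exact hXimg
    rw [← loopToAut_eq_one_iff]
    apply hinj2
    rw [h1, map_one]
  obtain ⟨K⟩ := hXnull
  set Hm : C(I × I, X) := ⟨fun p => K (p.2, p.1),
    K.continuous.comp (continuous_snd.prodMk continuous_fst)⟩ with hHm
  have hΓ0 : ∀ s : I, f (γ.toContinuousMap s) = Hm (s, 0) := by
    intro s
    show f (γ s) = K (0, s)
    rw [K.apply_zero]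
    show f (γ s) = loop s
    rw [hloop]
    rw [show ((γ.map hf.continuous).cast rfl hfab) s = f (γ s) from by rw [Path.cast_coe]; rfl]
  haveI : Nonempty Xt := ⟨x₀⟩
  haveI : ∀ b : X, Nonempty (f ⁻¹' {b}) := covering_fiber_nonempty hf
  obtain ⟨G, hGc, hGf, hG0⟩ := hlp hf Hm γ.toContinuousMap hΓ0
  have hside0 : G (0, 1) = a := by
    have hcont : Continuous (fun v : I => G (0, v)) := hGc.comp (by fun_prop)
    have he : ∀ v v' : I, f (G (0, v)) = f (G (0, v')) := by
      intro v v'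
      have hv : ∀ w : I, f (G (0, w)) = (f a : X) := by
        intro w
        rw [hGf (0, w)]
        show K (w, 0) = f a
        exact K.source w
      rw [hv v, hv v']
    have h01 := hf.const_of_comp hcont he 1 0
    rw [h01, hG0 0]
    exact γ.source
  have hside1 : G (1, 1) = b := by
    have hcont : Continuous (fun v : I => G (1, v)) := hGc.comp (by fun_prop)
    have he : ∀ v v' : I, f (G (1, v)) = f (G (1, v')) := by
      intro v v'
      have hv : ∀ w : I, f (G (1, w)) = (f a : X) := by
        intro w
        rw [hGf (1, w)]
        show K (w, 1) = f a
        exact K.target w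
      rw [hv v, hv v']
    have h01 := hf.const_of_comp hcont he 1 0
    rw [h01, hG0 1]
    exact γ.target
  have htop : G (0, 1) = G (1, 1) := by
    have hcont : Continuous (fun s : I => G (s, 1)) := hGc.comp (by fun_prop)
    have he : ∀ s s' : I, f (G (s, 1)) = f (G (s', 1)) := by
      intro s s'
      have hv : ∀ w : I, f (G (w, 1)) = (f a : X) := by
        intro w
        rw [hGf (w, 1)]
        show K (1, w) = f a
        rw [K.apply_one]
        rfl
      rw [hv s, hv s']
    exact hf.const_of_comp hcont he 0 1
  rw [← hside0, htop, hside1]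

end Main
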